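/- Let G be a finite tree with maximum degree Δ and let m ≥ 1. Then there exists a coloring c : V → {0, 1, …, ⌈Δ/m⌉} (hence using at most ⌈Δ/m⌉ + 1 colors) such that adjacent vertices receive different colors and, for every vertex v and every color k, at most m neighbors of v receive color k. -/

import Mathlib

open SimpleGraph Finset

universe u

-- Lemma A: a path between two vertices ≠ u avoids a leaf u (whose neighborhood is {v}).
lemma path_avoids_leaf {V : Type u} [Fintype V] [DecidableEq V] {G : SimpleGraph V}
    [DecidableRel G.Adj] {u v : V} (hNv : G.neighborFinset u = {v}) :
    ∀ {a b : V} (p : G.Walk a b), p.IsPath → a ≠ u → b ≠ u → u ∉ p.support := by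
  intro a b p
  induction p with
  | nil => intro _ ha _ h; simp at h; exact ha h.symm
  | @cons a w b h p ih =>
    intro hp ha hb hmem
    rw [SimpleGraph.Walk.support_cons, List.mem_cons] at hmem
    rcases hmem with h1 | h2
    · exact ha h1.symm
    by_cases hw : w = u
    · subst hw
      cases p with
      | nil => exact hb rfl
      | @cons _ w2 _ h' p'' =>
        have hav : a = v := by
          have : a ∈ G.neighborFinset w := by rw [SimpleGraph.mem_neighborFinset]; exact h.symm
          rw [hNv] at this; simpa using this
        have hw2v : w2 = v := by
          have : w2 ∈ G.neighborFinset w := by rw [SimpleGraph.mem_neighborFinset]; exact h'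
          rw [hNv] at this; simpa using this
        rw [SimpleGraph.Walk.cons_isPath_iff] at hp
        apply hp.2
        rw [SimpleGraph.Walk.support_cons, List.mem_cons]
        right
        rw [hav, ← hw2v]
        exact SimpleGraph.Walk.start_mem_support p''
    · rw [SimpleGraph.Walk.cons_isPath_iff] at hp
      exact ih hp.1 hw hb h2

-- Lemma B: a walk avoiding u lifts to reachability in the induced graph on {x // x ≠ u}.
lemma walk_lift {V : Type u} [Fintype V] [DecidableEq V] {G : SimpleGraph V}
    [DecidableRel G.Adj] {u : V} :
    ∀ {a b : V} (p : G.Walk a b) (ha : a ≠ u) (hb : b ≠ u), u ∉ p.support →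
      (G.comap (Subtype.val : {x : V // x ≠ u} → V)).Reachable ⟨a, ha⟩ ⟨b, hb⟩ := by
  intro a b p
  induction p with
  | nil => intro ha hb _; exact SimpleGraph.Reachable.refl _
  | @cons a w b h p ih =>
    intro ha hb hmem
    rw [SimpleGraph.Walk.support_cons, List.mem_cons] at hmem
    push_neg at hmem
    have hw : w ≠ u := by
      intro hwu; exact hmem.2 (hwu ▸ SimpleGraph.Walk.start_mem_support p)
    exact SimpleGraph.Reachable.trans
      (SimpleGraph.Adj.reachable
        (show (G.comap (Subtype.val : {x : V // x ≠ u} → V)).Adj ⟨a, ha⟩ ⟨w, hw⟩ from h))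
      (ih hw hb hmem.2)

theorem aux (n : ℕ) : ∀ {V : Type u} [Fintype V] [DecidableEq V] (G : SimpleGraph V)
    [DecidableRel G.Adj], Fintype.card V = n → G.IsTree → ∀ m : ℕ, 1 ≤ m →
    ∃ c : V → ℕ,
      (∀ v, c v ≤ (G.maxDegree + m - 1) / m) ∧
      (∀ u v, G.Adj u v → c u ≠ c v) ∧
      (∀ v k, ((G.neighborFinset v).filter (fun u => c u = k)).card ≤ m) := by
  induction n using Nat.strong_induction_on with
  | _ n IH =>
    intro V _ _ G _ hcard hT m hm
    by_cases hn : n ≤ 1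
    · -- at most one vertex: no edges
      have hnoadj : ∀ x y : V, ¬ G.Adj x y := by
        intro x y hxy
        have : 1 < Fintype.card V := Fintype.one_lt_card_iff_nontrivial.2 ⟨⟨x, y, hxy.ne⟩⟩
        omega
      refine ⟨fun _ => 0, fun _ => Nat.zero_le _, fun x y hxy => absurd hxy (hnoadj x y), ?_⟩
      intro v k
      have : G.neighborFinset v = ∅ := by
        ext x; simp only [SimpleGraph.mem_neighborFinset, Finset.notMem_empty, iff_false]
        exact hnoadj v x
      rw [this]; simp [hm]
    · push_neg at hn
      -- find a leaf u
      have hdeg1 : ∀ x : V, 1 ≤ G.degree x := by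
        intro x
        obtain ⟨y, hy⟩ := Fintype.exists_ne_of_one_lt_card (by omega) x
        obtain ⟨p⟩ := hT.isConnected.preconnected x y
        cases p with
        | nil => exact absurd rfl hy.symm
        | @cons _ w _ h p' =>
          rw [← SimpleGraph.card_neighborFinset_eq_degree]
          exact Finset.card_pos.2 ⟨w, by rw [SimpleGraph.mem_neighborFinset]; exact h⟩
      obtain ⟨u, hu⟩ : ∃ u : V, G.degree u = 1 := by
        by_contra hno
        push_neg at hno
        have h2 : ∀ x : V, 2 ≤ G.degree x := fun x => by
          have := hdeg1 x; have := hno x; omega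
        have hsum : ∑ x : V, G.degree x = 2 * G.edgeFinset.card :=
          G.sum_degrees_eq_twice_card_edges
        have hef : G.edgeFinset.card + 1 = n := hcard ▸ hT.card_edgeFinset
        have : 2 * n ≤ ∑ x : V, G.degree x := by
          calc 2 * n = ∑ _x : V, 2 := by rw [Finset.sum_const]; simp [hcard]; ring
          _ ≤ ∑ x : V, G.degree x := Finset.sum_le_sum fun x _ => h2 x
        omega
      obtain ⟨v, hNv⟩ : ∃ v : V, G.neighborFinset u = {v} :=
        Finset.card_eq_one.1 (by rw [SimpleGraph.card_neighborFinset_eq_degree]; exact hu)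
      have huv : G.Adj u v := by rw [← SimpleGraph.mem_neighborFinset, hNv]; exact Finset.mem_singleton_self v
      have hvu : v ≠ u := huv.ne'
      -- the induced graph on V \ {u}
      let G' : SimpleGraph {x : V // x ≠ u} := G.comap (Subtype.val : {x : V // x ≠ u} → V)
      haveI : DecidableRel G'.Adj := fun a b => (‹DecidableRel G.Adj› a.1 b.1 : _)
      have hcard' : Fintype.card {x : V // x ≠ u} = n - 1 := by
        have := Fintype.card_subtype_compl (fun x : V => x = u)
        simp only [Fintype.card_subtype_eq] at this
        rw [hcard] at this
        exact this
      haveI : Nonempty {x : V // x ≠ u} := ⟨⟨v, hvu⟩⟩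
      have hT' : G'.IsTree := by
        constructor
        · apply SimpleGraph.Connected.mk
          rintro ⟨a, ha⟩ ⟨b, hb⟩
          obtain ⟨p, hp, -⟩ := hT.existsUnique_path a b
          exact walk_lift p ha hb (path_avoids_leaf hNv p hp ha hb)
        · intro w p hp
          let f : G' →g G := ⟨Subtype.val, fun {a b} h => h⟩
          exact hT.IsAcyclic (p.map f) (hp.map Subtype.val_injective)
      have hdegle : ∀ x : {x : V // x ≠ u}, G'.degree x ≤ G.degree x.1 := by
        intro x
        rw [← SimpleGraph.card_neighborFinset_eq_degree, ← SimpleGraph.card_neighborFinset_eq_degree]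
        apply Finset.card_le_card_of_injOn (fun y => y.1)
        · intro y hy
          rw [Finset.mem_coe, SimpleGraph.mem_neighborFinset] at hy ⊢
          exact hy
        · intro y _ z _ h; exact Subtype.val_injective h
      have hΔ : G'.maxDegree ≤ G.maxDegree :=
        SimpleGraph.maxDegree_le_of_forall_degree_le _ _ fun x =>
          le_trans (hdegle x) (G.degree_le_maxDegree x.1)
      obtain ⟨c', h1', h2', h3'⟩ := IH (n - 1) (by omega) G' hcard' hT' m hm
      -- numeric facts
      set D := (G.maxDegree + m - 1) / m with hD
      have hΔ1 : 1 ≤ G.maxDegree := hu ▸ G.degree_le_maxDegree u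
      have hD1 : 1 ≤ D := by
        rw [hD, Nat.one_le_div_iff (by omega)]; omega
      have hmD : G.maxDegree ≤ m * D := by
        rw [hD]
        have h1 := Nat.div_add_mod (G.maxDegree + m - 1) m
        have h2 : (G.maxDegree + m - 1) % m < m := Nat.mod_lt _ (by omega)
        omega
      have hD'le : (G'.maxDegree + m - 1) / m ≤ D :=
        Nat.div_le_div_right (by omega)
      set a := c' ⟨v, hvu⟩ with ha
      have haD : a ≤ D := le_trans (h1' _) hD'le
      set N := G'.neighborFinset ⟨v, hvu⟩ with hN
      -- transfer lemmas between G and G'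
      have key0 : ∀ (w : V) (hw : w ≠ u),
          Finset.image Subtype.val (G'.neighborFinset ⟨w, hw⟩) = (G.neighborFinset w).erase u := by
        intro w hw
        ext x
        simp only [Finset.mem_image, Finset.mem_erase, SimpleGraph.mem_neighborFinset,
          SimpleGraph.comap_adj, Subtype.exists, G']
        constructor
        · rintro ⟨y, hyu, hadj, rfl⟩; exact ⟨hyu, hadj⟩
        · rintro ⟨hxu, hadj⟩; exact ⟨x, hxu, hadj, rfl⟩
      have key : ∀ (w : V) (hw : w ≠ u) (p : V → ℕ) (k0 : ℕ),
          ((G.neighborFinset w).erase u).filter (fun x => p x = k0) =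
            Finset.image Subtype.val
              ((G'.neighborFinset ⟨w, hw⟩).filter (fun y => p y.1 = k0)) := by
        intro w hw p k0
        ext x
        simp only [Finset.mem_filter, Finset.mem_erase, SimpleGraph.mem_neighborFinset,
          SimpleGraph.comap_adj, Finset.mem_image, Subtype.exists, G']
        constructor
        · rintro ⟨⟨hxu, hadj⟩, hp⟩
          exact ⟨x, hxu, ⟨hadj, hp⟩, rfl⟩
        · rintro ⟨y, hyu, ⟨hadj, hp⟩, rfl⟩
          exact ⟨⟨hyu, hadj⟩, hp⟩
      -- pigeonhole: pick a good color k for u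
      set T := (Finset.range (D + 1)).erase a with hTdef
      have hTcard : T.card = D := by
        rw [hTdef, Finset.card_erase_of_mem (Finset.mem_range.2 (by omega))]
        simp
      have hNcard : N.card ≤ G.maxDegree - 1 := by
        have h3 : N.card = ((G.neighborFinset v).erase u).card := by
          rw [← key0 v hvu, Finset.card_image_of_injective _ Subtype.val_injective]
        rw [h3, Finset.card_erase_of_mem
          (by rw [SimpleGraph.mem_neighborFinset]; exact huv.symm)]
        have := G.degree_le_maxDegree v
        rw [SimpleGraph.card_neighborFinset_eq_degree]
        omega
      obtain ⟨k, hkT, hkcnt⟩ : ∃ k ∈ T, (N.filter (fun y => c' y = k)).card ≤ m - 1 := by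
        by_contra hno
        push_neg at hno
        have hbig : ∀ k ∈ T, m ≤ (N.filter (fun y => c' y = k)).card := by
          intro k hk; have := hno k hk; omega
        have hsum : ∑ k ∈ T, (N.filter (fun y => c' y = k)).card ≤ N.card := by
          have hfib := Finset.card_eq_sum_card_fiberwise
            (f := fun y => c' y) (s := N.filter (fun y => c' y ∈ T)) (t := T)
            (fun y hy => (Finset.mem_filter.1 hy).2)
          have heq : ∀ k ∈ T, (N.filter (fun y => c' y ∈ T)).filter (fun y => c' y = k)
              = N.filter (fun y => c' y = k) := by
            intro k hk
            ext y
            simp only [Finset.mem_filter]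
            constructor
            · rintro ⟨⟨h1, _⟩, h3⟩; exact ⟨h1, h3⟩
            · rintro ⟨h1, h3⟩; exact ⟨⟨h1, by rw [h3]; exact hk⟩, h3⟩
          calc ∑ k ∈ T, (N.filter (fun y => c' y = k)).card
              = ∑ k ∈ T, ((N.filter (fun y => c' y ∈ T)).filter (fun y => c' y = k)).card :=
                Finset.sum_congr rfl (fun k hk => by rw [heq k hk])
            _ = (N.filter (fun y => c' y ∈ T)).card := hfib.symm
            _ ≤ N.card := Finset.card_le_card (Finset.filter_subset _ _)
        have hcontra : m * D ≤ N.card := by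
          calc m * D = ∑ _k ∈ T, m := by rw [Finset.sum_const, hTcard]; ring
            _ ≤ ∑ k ∈ T, (N.filter (fun y => c' y = k)).card := Finset.sum_le_sum hbig
            _ ≤ N.card := hsum
        omega
      obtain ⟨hka, hkD⟩ : k ≠ a ∧ k ≤ D := by
        rw [hTdef] at hkT
        have h1 := Finset.mem_erase.1 hkT
        exact ⟨h1.1, by have := Finset.mem_range.1 h1.2; omega⟩
      -- define the extended coloring
      set c : V → ℕ := fun x => if hx : x = u then k else c' ⟨x, hx⟩ with hc
      have hcu : c u = k := by simp [hc]
      have hcne : ∀ (x : V) (hx : x ≠ u), c x = c' ⟨x, hx⟩ := fun x hx => dif_neg hx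
      have cntle : ∀ (w : V) (hw : w ≠ u) (k0 : ℕ),
          (((G.neighborFinset w).erase u).filter (fun x => c x = k0)).card
            = ((G'.neighborFinset ⟨w, hw⟩).filter (fun y => c' y = k0)).card := by
        intro w hw k0
        rw [key w hw c k0, Finset.card_image_of_injective _ Subtype.val_injective]
        congr 1
        apply Finset.filter_congr
        intro y _
        rw [hcne y.1 y.2]
      refine ⟨c, ?_, ?_, ?_⟩
      · intro x
        by_cases hx : x = u
        · rw [hx, hcu]; exact hkD
        · rw [hcne x hx]; exact le_trans (h1' _) hD'le
      · intro x y hxy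
        by_cases hx : x = u
        · subst hx
          have hyv : y = v := by
            have : y ∈ G.neighborFinset x := by rw [SimpleGraph.mem_neighborFinset]; exact hxy
            rw [hNv] at this; simpa using this
          rw [hcu, hyv, hcne v hvu, ← ha]
          exact hka
        · by_cases hy : y = u
          · subst hy
            have hxv : x = v := by
              have : x ∈ G.neighborFinset y := by
                rw [SimpleGraph.mem_neighborFinset]; exact hxy.symm
              rw [hNv] at this; simpa using this
            rw [hcu, hxv, hcne v hvu, ← ha]
            exact Ne.symm hka
          · rw [hcne x hx, hcne y hy]
            exact h2' ⟨x, hx⟩ ⟨y, hy⟩ hxy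
      · intro w k0
        by_cases hw : w = u
        · subst hw
          rw [hNv]
          refine le_trans (Finset.card_le_card (Finset.filter_subset _ _)) ?_
          simpa using hm
        · by_cases hadj : u ∈ G.neighborFinset w
          · -- then w = v
            have hwv : w = v := by
              have : w ∈ G.neighborFinset u := by
                rw [SimpleGraph.mem_neighborFinset] at hadj ⊢
                exact hadj.symm
              rw [hNv] at this; simpa using this
            rw [← Finset.insert_erase hadj, Finset.filter_insert]
            by_cases hk0 : c u = k0
            · rw [if_pos hk0]
              refine le_trans (Finset.card_insert_le _ _) ?_
              have h5 := cntle w hw k0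
              rw [show (⟨w, hw⟩ : {x : V // x ≠ u}) = ⟨v, hvu⟩ from Subtype.ext hwv] at h5
              have hk0k : k0 = k := by rw [← hk0, hcu]
              rw [h5, hk0k, ← hN]
              have := hkcnt
              omega
            · rw [if_neg hk0, cntle w hw k0]
              exact h3' _ _
          · have herase : (G.neighborFinset w).erase u = G.neighborFinset w :=
              Finset.erase_eq_of_notMem hadj
            rw [← herase, cntle w hw k0]
            exact h3' _ _

/-- Every finite tree with maximum degree Δ admits a conflict-free,
m-collision-free coloring with colors in {0, 1, …, ⌈Δ/m⌉}, hence using at most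
⌈Δ/m⌉ + 1 colors. (For naturals with m ≥ 1, ⌈Δ/m⌉ = (Δ + m - 1) / m.) -/
theorem stmt_3 {V : Type*} [Fintype V] [DecidableEq V] (G : SimpleGraph V)
    [DecidableRel G.Adj] (hT : G.IsTree) (m : ℕ) (hm : 1 ≤ m) :
    ∃ c : V → ℕ,
      (∀ v, c v ≤ (G.maxDegree + m - 1) / m) ∧
      (∀ u v, G.Adj u v → c u ≠ c v) ∧
      (∀ v k, ((G.neighborFinset v).filter (fun u => c u = k)).card ≤ m) := by
  exact aux (Fintype.card V) G rfl hT m hm
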